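/- arXiv:2102.07364 — 5 statements merged into one kernel-verified Lean document; each statement's English description precedes it below -/
import Mathlib

section
/- (Maurey's empirical method) For the l1 ball B₁ᵈ(r) = {x ∈ ℝᵈ : ‖x‖₁ ≤ r} and any δ > 0, the logarithm of the δ-covering number of B₁ᵈ(r) in the Euclidean (l2) norm is at most (r²/δ²)·log(2d+1). -/
noncomputable def coveringNumber {α : Type*} [PseudoMetricSpace α] (δ : ℝ) (T : Set α) : ℕ∞ :=
  ⨅ (S : Finset α) (_ : ↑S ⊆ T ∧ ∀ x ∈ T, ∃ y ∈ S, dist x y ≤ δ), (S.card : ℕ∞)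

/-- The `l1` ball of radius `r` inside `ℝᵈ`, viewed with its Euclidean (`l2`) metric. -/
def l1Ball (d : ℕ) (r : ℝ) : Set (EuclideanSpace ℝ (Fin d)) := {x | ∑ i, |x i| ≤ r}

open Finset
open scoped Classical

section MaureyAux

local notation "⟪" x ", " y "⟫" => @inner ℝ _ _ x y

variable {d : ℕ}

/-- The alphabet `{0} ∪ {± r eⱼ}` of at most `2d+1` points. -/
noncomputable def maureyZ (d : ℕ) (r : ℝ) : Finset (EuclideanSpace ℝ (Fin d)) :=
  insert 0 ((Finset.univ.image fun j : Fin d => EuclideanSpace.single j r) ∪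
    Finset.univ.image fun j : Fin d => EuclideanSpace.single j (-r))

/-- `t`-fold sums of elements of the alphabet. -/
noncomputable def maureyGrid (d : ℕ) (r : ℝ) : ℕ → Finset (EuclideanSpace ℝ (Fin d))
  | 0 => {0}
  | t + 1 => ((maureyGrid d r t) ×ˢ maureyZ d r).image fun p => p.1 + p.2

lemma maureyZ_card (r : ℝ) : (maureyZ d r).card ≤ 2 * d + 1 := by
  refine (Finset.card_insert_le _ _).trans ?_
  have := (Finset.card_union_le (Finset.univ.image fun j : Fin d => EuclideanSpace.single j r)
    (Finset.univ.image fun j : Fin d => EuclideanSpace.single j (-r)))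
  have h1 := Finset.card_image_le (s := (Finset.univ : Finset (Fin d)))
    (f := fun j : Fin d => EuclideanSpace.single j r)
  have h2 := Finset.card_image_le (s := (Finset.univ : Finset (Fin d)))
    (f := fun j : Fin d => EuclideanSpace.single j (-r))
  simp only [Finset.card_univ, Fintype.card_fin] at h1 h2
  omega

lemma maureyGrid_card (r : ℝ) (t : ℕ) : (maureyGrid d r t).card ≤ (2 * d + 1) ^ t := by
  induction t with
  | zero => simp [maureyGrid]
  | succ t ih =>
    calc (maureyGrid d r (t+1)).card ≤ ((maureyGrid d r t) ×ˢ maureyZ d r).card :=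
          Finset.card_image_le
    _ = (maureyGrid d r t).card * (maureyZ d r).card := Finset.card_product _ _
    _ ≤ (2*d+1)^t * (2*d+1) := Nat.mul_le_mul ih (maureyZ_card r)
    _ = (2*d+1)^(t+1) := by ring

lemma zero_mem_maureyGrid (r : ℝ) (t : ℕ) :
    (0 : EuclideanSpace ℝ (Fin d)) ∈ maureyGrid d r t := by
  induction t with
  | zero => simp [maureyGrid]
  | succ t ih =>
    have h0 : (0 : EuclideanSpace ℝ (Fin d)) = 0 + 0 := by simp
    rw [maureyGrid, h0]
    exact Finset.mem_image.2 ⟨(0, 0), Finset.mem_product.2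
      ⟨ih, Finset.mem_insert_self _ _⟩, rfl⟩

lemma maureyZ_l1 {r : ℝ} (hr : 0 ≤ r) {z : EuclideanSpace ℝ (Fin d)} (hz : z ∈ maureyZ d r) :
    ∑ i, |z i| ≤ r := by
  simp only [maureyZ, Finset.mem_insert, Finset.mem_union, Finset.mem_image, Finset.mem_univ,
    true_and] at hz
  rcases hz with rfl | ⟨j, rfl⟩ | ⟨j, rfl⟩ <;>
    simp [EuclideanSpace.single_apply, apply_ite abs, abs_of_nonneg hr, hr]

lemma maureyGrid_l1 {r : ℝ} (hr : 0 ≤ r) {t : ℕ} {v : EuclideanSpace ℝ (Fin d)}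
    (hv : v ∈ maureyGrid d r t) : ∑ i, |v i| ≤ t * r := by
  induction t generalizing v with
  | zero => simp only [maureyGrid, Finset.mem_singleton] at hv; subst hv; simp
  | succ t ih =>
    rw [maureyGrid] at hv
    obtain ⟨⟨a, b⟩, hab, rfl⟩ := Finset.mem_image.1 hv
    obtain ⟨ha, hb⟩ := Finset.mem_product.1 hab
    have habs : ∀ i, |(a + b) i| ≤ |a i| + |b i| := fun i => by
      have : (a + b) i = a i + b i := rfl
      rw [this]; exact abs_add_le _ _
    calc ∑ i, |(a + b) i| ≤ ∑ i, (|a i| + |b i|) := Finset.sum_le_sum fun i _ => habs i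
    _ = (∑ i, |a i|) + ∑ i, |b i| := Finset.sum_add_distrib
    _ ≤ t * r + r := add_le_add (ih ha) (maureyZ_l1 hr hb)
    _ = (t + 1 : ℕ) * r := by push_cast; ring

lemma exists_le_of_wavg {ι : Type*} [Fintype ι] (p f : ι → ℝ) (hp : ∀ a, 0 ≤ p a)
    (hs : ∑ a, p a = 1) {B : ℝ} (hB : ∑ a, p a * f a ≤ B) : ∃ a, f a ≤ B := by
  by_contra h
  push_neg at h
  have hex : ∃ a, 0 < p a := by
    by_contra hc
    push_neg at hc
    have : ∀ a, p a = 0 := fun a => le_antisymm (hc a) (hp a)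
    simp [this] at hs
  obtain ⟨a₀, ha₀⟩ := hex
  have h1 : ∀ a ∈ Finset.univ, p a * B ≤ p a * f a :=
    fun a _ => mul_le_mul_of_nonneg_left (h a).le (hp a)
  have h2 := Finset.sum_lt_sum h1 ⟨a₀, Finset.mem_univ a₀,
    mul_lt_mul_of_pos_left (h a₀) ha₀⟩
  rw [← Finset.sum_mul, hs, one_mul] at h2
  exact absurd hB (not_le.2 h2)

lemma eucl_smul_single (c a : ℝ) (j : Fin d) :
    c • EuclideanSpace.single j a = EuclideanSpace.single j (c * a) := by
  ext i
  simp [EuclideanSpace.single_apply, mul_ite]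

lemma eucl_sum_single (x : EuclideanSpace ℝ (Fin d)) :
    ∑ j, EuclideanSpace.single j (x j) = x := by
  ext i
  rw [WithLp.ofLp_sum, Finset.sum_apply i Finset.univ fun j => (EuclideanSpace.single j (x j)).ofLp]
  simp [EuclideanSpace.single_apply]

lemma eucl_norm_le_l1 (x : EuclideanSpace ℝ (Fin d)) : ‖x‖ ≤ ∑ i, |x i| := by
  rw [EuclideanSpace.norm_eq]
  have h1 : ∑ i, ‖x i‖ ^ 2 ≤ (∑ i, ‖x i‖) ^ 2 :=
    Finset.sum_sq_le_sq_sum_of_nonneg fun i _ => norm_nonneg _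
  calc Real.sqrt (∑ i, ‖x i‖ ^ 2) ≤ Real.sqrt ((∑ i, ‖x i‖) ^ 2) := Real.sqrt_le_sqrt h1
  _ = ∑ i, ‖x i‖ := Real.sqrt_sq (Finset.sum_nonneg fun i _ => norm_nonneg _)
  _ = ∑ i, |x i| := by simp [Real.norm_eq_abs]

/-- The key inductive (Maurey empirical) approximation step. -/
lemma maurey_key {r : ℝ} (hr : 0 < r) {x : EuclideanSpace ℝ (Fin d)}
    (hx : ∑ i, |x i| ≤ r) (t : ℕ) :
    ∃ v ∈ maureyGrid d r t, ‖v - (t : ℝ) • x‖ ^ 2 ≤ t * (r ^ 2 - ‖x‖ ^ 2) := by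
  induction t with
  | zero =>
    refine ⟨0, by simp [maureyGrid], ?_⟩
    simp
  | succ t ih =>
    obtain ⟨v, hv, hb⟩ := ih
    set p : Option (Fin d) → ℝ :=
      fun a => a.elim (1 - (∑ i, |x i|) / r) fun j => |x j| / r with hp_def
    set z : Option (Fin d) → EuclideanSpace ℝ (Fin d) :=
      fun a => a.elim 0 fun j => EuclideanSpace.single j (if 0 ≤ x j then r else -r)
      with hz_def
    have hrne : r ≠ 0 := ne_of_gt hr
    have hp : ∀ a, 0 ≤ p a := by
      rintro (_ | j)
      · have : (∑ i, |x i|) / r ≤ 1 := by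
          rw [div_le_one hr]; exact hx
        simpa [hp_def] using this
      · exact div_nonneg (abs_nonneg _) hr.le
    have hs : ∑ a, p a = 1 := by
      rw [Fintype.sum_option]
      simp only [hp_def, Option.elim]
      rw [← Finset.sum_div]
      ring
    have hmean : ∑ a, p a • z a = x := by
      rw [Fintype.sum_option]
      simp only [hp_def, hz_def, Option.elim, smul_zero, zero_add]
      have hsingle : ∀ j : Fin d,
          (|x j| / r) • EuclideanSpace.single j (if 0 ≤ x j then r else -r)
          = EuclideanSpace.single j (x j) := by
        intro j
        rw [eucl_smul_single]
        congr 1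
        split_ifs with h
        · rw [abs_of_nonneg h]; field_simp
        · rw [abs_of_neg (not_le.1 h)]; field_simp
      simp only [hsingle]
      exact eucl_sum_single x
    have hzsq : ∀ a, ‖z a‖ ^ 2 ≤ r ^ 2 := by
      rintro (_ | j)
      · simp only [hz_def, Option.elim, norm_zero]
        nlinarith [sq_nonneg r]
      · simp only [hz_def, Option.elim, EuclideanSpace.norm_single]
        split_ifs <;> simp [abs_of_nonneg hr.le, abs_of_nonpos (neg_nonpos.2 hr.le)]
    set u : EuclideanSpace ℝ (Fin d) := v - (t : ℝ) • x with hu_def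
    have hsplit : ∀ a, (v + z a) - ((t : ℝ) + 1) • x = u + (z a - x) := by
      intro a
      rw [hu_def, add_smul, one_smul]
      abel
    have hcross : ∑ a, p a * ⟪u, z a - x⟫ = 0 := by
      have hzero : ∑ a, p a • (z a - x) = 0 := by
        simp only [smul_sub]
        rw [Finset.sum_sub_distrib, hmean, ← Finset.sum_smul, hs, one_smul, sub_self]
      calc ∑ a, p a * ⟪u, z a - x⟫ = ∑ a, ⟪u, p a • (z a - x)⟫ :=
            Finset.sum_congr rfl fun a _ => (real_inner_smul_right u (z a - x) (p a)).symm
      _ = ⟪u, ∑ a, p a • (z a - x)⟫ := (inner_sum _ _ _).symm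
      _ = 0 := by rw [hzero, inner_zero_right]
    have hinner_zx : ∑ a, p a * ⟪z a, x⟫ = ‖x‖ ^ 2 := by
      calc ∑ a, p a * ⟪z a, x⟫ = ∑ a, ⟪p a • z a, x⟫ :=
            Finset.sum_congr rfl fun a _ => (real_inner_smul_left (z a) x (p a)).symm
      _ = ⟪∑ a, p a • z a, x⟫ := (sum_inner _ _ _).symm
      _ = ‖x‖ ^ 2 := by rw [hmean, real_inner_self_eq_norm_sq]
    have hsecond : ∑ a, p a * ‖z a - x‖ ^ 2 ≤ r ^ 2 - ‖x‖ ^ 2 := by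
      have expand : ∀ a : Option (Fin d), ‖z a - x‖ ^ 2
          = ‖z a‖ ^ 2 - 2 * ⟪z a, x⟫ + ‖x‖ ^ 2 := by
        intro a; rw [norm_sub_sq_real]
      calc ∑ a, p a * ‖z a - x‖ ^ 2
          = ∑ a, (p a * ‖z a‖ ^ 2 - 2 * (p a * ⟪z a, x⟫) + p a * ‖x‖ ^ 2) := by
            refine Finset.sum_congr rfl fun a _ => ?_
            rw [expand a]; ring
      _ = (∑ a, p a * ‖z a‖ ^ 2) - 2 * (∑ a, p a * ⟪z a, x⟫) + (∑ a, p a) * ‖x‖ ^ 2 := by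
            rw [Finset.sum_add_distrib, Finset.sum_sub_distrib, ← Finset.mul_sum,
              ← Finset.sum_mul]
      _ ≤ (∑ a, p a * r ^ 2) - 2 * ‖x‖ ^ 2 + 1 * ‖x‖ ^ 2 := by
            rw [hinner_zx, hs]
            have hle : ∑ a, p a * ‖z a‖ ^ 2 ≤ ∑ a, p a * r ^ 2 :=
              Finset.sum_le_sum fun a _ => mul_le_mul_of_nonneg_left (hzsq a) (hp a)
            linarith
      _ = r ^ 2 - ‖x‖ ^ 2 := by rw [← Finset.sum_mul, hs]; ring
    have havg : ∑ a, p a * ‖(v + z a) - (((t : ℕ) + 1 : ℕ) : ℝ) • x‖ ^ 2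
        ≤ (((t : ℕ) + 1 : ℕ) : ℝ) * (r ^ 2 - ‖x‖ ^ 2) := by
      push_cast
      calc ∑ a, p a * ‖(v + z a) - ((t : ℝ) + 1) • x‖ ^ 2
          = ∑ a, p a * (‖u‖ ^ 2 + 2 * ⟪u, z a - x⟫ + ‖z a - x‖ ^ 2) := by
            refine Finset.sum_congr rfl fun a _ => ?_
            rw [hsplit a, norm_add_sq_real]
      _ = (∑ a, p a) * ‖u‖ ^ 2 + 2 * (∑ a, p a * ⟪u, z a - x⟫)
            + ∑ a, p a * ‖z a - x‖ ^ 2 := by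
            conv_rhs => rw [Finset.sum_mul, Finset.mul_sum]
            rw [← Finset.sum_add_distrib, ← Finset.sum_add_distrib]
            exact Finset.sum_congr rfl fun a _ => by ring
      _ ≤ 1 * ((t : ℝ) * (r ^ 2 - ‖x‖ ^ 2)) + 2 * 0 + (r ^ 2 - ‖x‖ ^ 2) := by
            rw [hs, hcross]
            exact add_le_add (add_le_add
              (mul_le_mul_of_nonneg_left hb zero_le_one) le_rfl) hsecond
      _ = ((t : ℝ) + 1) * (r ^ 2 - ‖x‖ ^ 2) := by ring
    obtain ⟨a, ha⟩ := exists_le_of_wavg p _ hp hs havg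
    have hzmem : z a ∈ maureyZ d r := by
      rcases a with _ | j
      · exact Finset.mem_insert_self _ _
      · simp only [hz_def, Option.elim]
        refine Finset.mem_insert_of_mem (Finset.mem_union.2 ?_)
        split_ifs
        · exact Or.inl (Finset.mem_image.2 ⟨j, Finset.mem_univ j, rfl⟩)
        · exact Or.inr (Finset.mem_image.2 ⟨j, Finset.mem_univ j, rfl⟩)
    refine ⟨v + z a, ?_, ?_⟩
    · rw [maureyGrid]
      exact Finset.mem_image.2 ⟨(v, z a), Finset.mem_product.2 ⟨hv, hzmem⟩, rfl⟩
    · exact_mod_cast ha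

lemma coveringNumber_le_card {α : Type*} [PseudoMetricSpace α] {δ : ℝ} {T : Set α}
    (S : Finset α) (h : ↑S ⊆ T ∧ ∀ x ∈ T, ∃ y ∈ S, dist x y ≤ δ) :
    coveringNumber δ T ≤ (S.card : ℕ∞) :=
  iInf₂_le S h

lemma le_of_sq_le_sq' {a b : ℝ} (ha : 0 ≤ a) (hb : 0 ≤ b) (h : a ^ 2 ≤ b ^ 2) : a ≤ b := by
  nlinarith

end MaureyAux

/-- Maurey's empirical method: `log N(δ, B₁ᵈ(r), ‖·‖₂) ≤ (r²/δ²)·log(2d+1)`. -/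
theorem maurey_covering_l1_ball (d : ℕ) (r δ : ℝ) (hr : 0 < r) (hδ : 0 < δ) :
    coveringNumber δ (l1Ball d r) ≠ ⊤ ∧
      Real.log ((coveringNumber δ (l1Ball d r)).toNat) ≤
        r ^ 2 / δ ^ 2 * Real.log (2 * d + 1) := by
  have hlog : (0:ℝ) ≤ Real.log (2 * d + 1) := by
    apply Real.log_nonneg
    have : (0:ℝ) ≤ (d:ℝ) := Nat.cast_nonneg d
    linarith
  have hRHS : (0:ℝ) ≤ r ^ 2 / δ ^ 2 * Real.log (2 * d + 1) := by positivity
  by_cases hcase : r ≤ δ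
  · -- one point suffices
    have hgood : ↑({0} : Finset (EuclideanSpace ℝ (Fin d))) ⊆ l1Ball d r ∧
        ∀ x ∈ l1Ball d r, ∃ y ∈ ({0} : Finset (EuclideanSpace ℝ (Fin d))), dist x y ≤ δ := by
      constructor
      · intro y hy
        simp only [Finset.coe_singleton, Set.mem_singleton_iff] at hy
        subst hy
        simp [l1Ball, hr.le]
      · intro x hx
        refine ⟨0, Finset.mem_singleton_self 0, ?_⟩
        rw [dist_zero_right]
        exact (eucl_norm_le_l1 x).trans (hx.trans hcase)
    have hle := coveringNumber_le_card _ hgood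
    simp only [Finset.card_singleton, Nat.cast_one] at hle
    refine ⟨ne_top_of_le_ne_top (ENat.coe_ne_top 1) hle, ?_⟩
    have htn : (coveringNumber δ (l1Ball d r)).toNat ≤ 1 := ENat.toNat_le_of_le_coe hle
    have := Real.log_nonpos (by positivity)
      (by exact_mod_cast htn : ((coveringNumber δ (l1Ball d r)).toNat : ℝ) ≤ 1)
    linarith
  · push_neg at hcase
    set s : ℝ := r ^ 2 / δ ^ 2 with hs_def
    have hδ2 : δ ^ 2 < r ^ 2 := by nlinarith
    have hs1 : 1 < s := (one_lt_div (by positivity)).2 hδ2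
    set t : ℕ := ⌈s⌉₊ - 1 with ht_def
    have hceil2 : 2 ≤ ⌈s⌉₊ := by
      have := Nat.lt_ceil.2 (by exact_mod_cast hs1 : ((1:ℕ):ℝ) < s)
      omega
    have htceil : t + 1 = ⌈s⌉₊ := by omega
    have ht1 : 1 ≤ t := by omega
    have htpos : (0:ℝ) < (t:ℝ) := by exact_mod_cast ht1
    have htne : (t:ℝ) ≠ 0 := ne_of_gt htpos
    have hst : s ≤ (t:ℝ) + 1 := by
      have h := Nat.le_ceil s
      rw [← htceil] at h
      exact_mod_cast h
    have hts : (t:ℝ) ≤ s := by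
      have h := Nat.ceil_lt_add_one (le_of_lt (lt_trans one_pos hs1))
      have h2 : ((t:ℝ) + 1) < s + 1 := by
        rw [show ((t:ℝ) + 1) = ((t + 1 : ℕ) : ℝ) by push_cast; ring, htceil]
        exact h
      linarith
    have hr2 : r ^ 2 ≤ ((t:ℝ) + 1) * δ ^ 2 := by
      rw [hs_def, div_le_iff₀ (by positivity)] at hst
      linarith [hst]
    set S : Finset (EuclideanSpace ℝ (Fin d)) :=
      (maureyGrid d r t).image fun v => ((t:ℝ))⁻¹ • v with hS_def
    have hgood : ↑S ⊆ l1Ball d r ∧ ∀ x ∈ l1Ball d r, ∃ y ∈ S, dist x y ≤ δ := by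
      constructor
      · intro y hy
        simp only [hS_def, Finset.coe_image, Set.mem_image, Finset.mem_coe] at hy
        obtain ⟨v, hv, rfl⟩ := hy
        have hl1 := maureyGrid_l1 hr.le hv
        have happ : ∀ i, ((t:ℝ)⁻¹ • v) i = (t:ℝ)⁻¹ * v i := fun i => rfl
        simp only [l1Ball, Set.mem_setOf_eq]
        calc ∑ i, |((t:ℝ)⁻¹ • v) i| = ∑ i, (t:ℝ)⁻¹ * |v i| := by
              refine Finset.sum_congr rfl fun i _ => ?_
              rw [happ i, abs_mul, abs_of_nonneg (by positivity : (0:ℝ) ≤ (t:ℝ)⁻¹)]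
        _ = (t:ℝ)⁻¹ * ∑ i, |v i| := by rw [Finset.mul_sum]
        _ ≤ (t:ℝ)⁻¹ * ((t:ℝ) * r) := by
              apply mul_le_mul_of_nonneg_left (maureyGrid_l1 hr.le hv) (by positivity)
        _ = r := by field_simp
      · intro x hx
        simp only [l1Ball, Set.mem_setOf_eq] at hx
        by_cases hxs : ‖x‖ ^ 2 * ((t:ℝ) + 1) ≤ r ^ 2
        · refine ⟨0, ?_, ?_⟩
          · exact Finset.mem_image.2 ⟨0, zero_mem_maureyGrid r t, smul_zero _⟩
          · rw [dist_zero_right]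
            refine le_of_sq_le_sq' (norm_nonneg x) hδ.le ?_
            nlinarith [hr2]
        · push_neg at hxs
          obtain ⟨v, hv, hb⟩ := maurey_key hr hx t
          refine ⟨(t:ℝ)⁻¹ • v, Finset.mem_image.2 ⟨v, hv, rfl⟩, ?_⟩
          rw [dist_eq_norm]
          have hform : x - (t:ℝ)⁻¹ • v = (t:ℝ)⁻¹ • ((t:ℝ) • x - v) := by
            rw [smul_sub, smul_smul, inv_mul_cancel₀ htne, one_smul]
          have hnorm : ‖x - (t:ℝ)⁻¹ • v‖ = (t:ℝ)⁻¹ * ‖v - (t:ℝ) • x‖ := by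
            rw [hform, norm_smul, norm_sub_rev]
            simp [abs_of_nonneg (inv_nonneg.2 htpos.le)]
          refine le_of_sq_le_sq' (norm_nonneg _) hδ.le ?_
          rw [hnorm, mul_pow]
          have hkey : ((t:ℝ)⁻¹) ^ 2 * ((t:ℝ) * (r ^ 2 - ‖x‖ ^ 2)) ≤ δ ^ 2 := by
            rw [show ((t:ℝ)⁻¹) ^ 2 * ((t:ℝ) * (r ^ 2 - ‖x‖ ^ 2))
                = (r ^ 2 - ‖x‖ ^ 2) / (t:ℝ) by field_simp]
            rw [div_le_iff₀ htpos]
            nlinarith [hr2, hxs]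
          calc ((t:ℝ)⁻¹) ^ 2 * ‖v - (t:ℝ) • x‖ ^ 2
              ≤ ((t:ℝ)⁻¹) ^ 2 * ((t:ℝ) * (r ^ 2 - ‖x‖ ^ 2)) := by
                apply mul_le_mul_of_nonneg_left hb (by positivity)
          _ ≤ δ ^ 2 := hkey
    have hcard : S.card ≤ (2 * d + 1) ^ t :=
      Finset.card_image_le.trans (maureyGrid_card r t)
    have hle : coveringNumber δ (l1Ball d r) ≤ (((2 * d + 1) ^ t : ℕ) : ℕ∞) :=
      (coveringNumber_le_card S hgood).trans (by exact_mod_cast hcard)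
    refine ⟨ne_top_of_le_ne_top (ENat.coe_ne_top _) hle, ?_⟩
    have htn : (coveringNumber δ (l1Ball d r)).toNat ≤ (2 * d + 1) ^ t :=
      ENat.toNat_le_of_le_coe hle
    set N : ℕ := (coveringNumber δ (l1Ball d r)).toNat with hN_def
    rcases Nat.eq_zero_or_pos N with hN0 | hNpos
    · rw [hN0]
      simpa using hRHS
    · have hlogN : Real.log N ≤ Real.log (((2 * d + 1) ^ t : ℕ) : ℝ) :=
        Real.log_le_log (by exact_mod_cast hNpos) (by exact_mod_cast htn)
      have hcast : (((2 * d + 1) ^ t : ℕ) : ℝ) = (2 * (d:ℝ) + 1) ^ t := by push_cast; ring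
      rw [hcast, Real.log_pow] at hlogN
      calc Real.log N ≤ (t:ℝ) * Real.log (2 * (d:ℝ) + 1) := hlogN
      _ ≤ s * Real.log (2 * (d:ℝ) + 1) := mul_le_mul_of_nonneg_right hts hlog
      _ = r ^ 2 / δ ^ 2 * Real.log (2 * (d:ℝ) + 1) := by rw [hs_def]
end

section
/- Fix x ∈ ℝᵈ with ‖x‖₁ ≤ r and let Z be the random vector taking value sgn(xᵢ)·r·eᵢ with probability |xᵢ|/r for each i, and 0 with probability 1 − ‖x‖₁/r. Then E[Z] = x and, for the average Z̄ of t independent copies of Z, E[‖Z̄ − x‖₂²] ≤ r²/t. -/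
open MeasureTheory ProbabilityTheory

private lemma sgn_mul_abs (a : ℝ) : Real.sign a * |a| = a := by
  rcases lt_trichotomy a 0 with h | h | h
  · rw [Real.sign_of_neg h, abs_of_neg h]; ring
  · simp [h]
  · rw [Real.sign_of_pos h, abs_of_pos h]; ring

private lemma sgn_mul_self (a : ℝ) : Real.sign a * a = |a| := by
  rcases lt_trichotomy a 0 with h | h | h
  · rw [Real.sign_of_neg h, abs_of_neg h]; ring
  · simp [h]
  · rw [Real.sign_of_pos h, abs_of_pos h]; ring

private lemma sgn_sq_le_one (a : ℝ) : Real.sign a ^ 2 ≤ 1 := by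
  rcases Real.sign_apply_eq a with h | h | h <;> rw [h] <;> norm_num

private lemma abs_mul_sgn_sq (a : ℝ) : |a| * Real.sign a ^ 2 = |a| := by
  rcases lt_trichotomy a 0 with h | h | h
  · rw [Real.sign_of_neg h]; ring
  · simp [h]
  · rw [Real.sign_of_pos h]; ring

private lemma maurey_integral {d : ℕ} (x : EuclideanSpace ℝ (Fin d)) (r : ℝ)
    {F : Type} [NormedAddCommGroup F] [NormedSpace ℝ F] [CompleteSpace F]
    (hc : ∀ i, 0 ≤ |x i| / r) (hc' : 0 ≤ 1 - (∑ i, |x i|) / r)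
    (g : EuclideanSpace ℝ (Fin d) → F) (hg : StronglyMeasurable g) :
    Integrable g ((∑ i, ENNReal.ofReal (|x i| / r) •
          Measure.dirac (EuclideanSpace.single i (Real.sign (x i) * r))) +
        ENNReal.ofReal (1 - (∑ i, |x i|) / r) • Measure.dirac 0) ∧
    (∫ z, g z ∂((∑ i, ENNReal.ofReal (|x i| / r) •
          Measure.dirac (EuclideanSpace.single i (Real.sign (x i) * r))) +
        ENNReal.ofReal (1 - (∑ i, |x i|) / r) • Measure.dirac 0)) =
      (∑ i, (|x i| / r) • g (EuclideanSpace.single i (Real.sign (x i) * r))) +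
        (1 - (∑ i, |x i|) / r) • g 0 := by
  have hsd : ∀ (c : ENNReal), c ≠ ⊤ → ∀ (a : EuclideanSpace ℝ (Fin d)),
      Integrable g (c • Measure.dirac a) := by
    intro c hctop a
    refine ⟨hg.aestronglyMeasurable, ?_⟩
    simp only [HasFiniteIntegral, lintegral_smul_measure, lintegral_dirac]
    exact ENNReal.mul_lt_top hctop.lt_top ENNReal.coe_lt_top
  have h1 : Integrable g (∑ i, ENNReal.ofReal (|x i| / r) •
      Measure.dirac (EuclideanSpace.single i (Real.sign (x i) * r))) :=
    integrable_finset_sum_measure.mpr fun i _ => hsd _ ENNReal.ofReal_ne_top _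
  have h2 := hsd (ENNReal.ofReal (1 - (∑ i, |x i|) / r)) ENNReal.ofReal_ne_top 0
  refine ⟨h1.add_measure h2, ?_⟩
  rw [integral_add_measure h1 h2,
    integral_finset_sum_measure fun i _ => hsd _ ENNReal.ofReal_ne_top _]
  simp only [integral_smul_measure, integral_dirac]
  rw [ENNReal.toReal_ofReal hc']
  congr 1
  exact Finset.sum_congr rfl fun i _ => by rw [ENNReal.toReal_ofReal (hc i)]

private lemma maurey_coord {d : ℕ} (x : EuclideanSpace ℝ (Fin d)) (r : ℝ) (hr : 0 < r)
    (k : Fin d) :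
    ∑ i, (|x i| / r) * (EuclideanSpace.single i (Real.sign (x i) * r) k) = x k := by
  rw [Finset.sum_eq_single k]
  · rw [EuclideanSpace.single_apply, if_pos rfl]
    field_simp
    linear_combination sgn_mul_abs (x k)
  · intro i _ hik
    rw [EuclideanSpace.single_apply, if_neg (Ne.symm hik), mul_zero]
  · intro h; exact absurd (Finset.mem_univ k) h

/-- The Maurey random vector: `Z = sgn(xᵢ)·r·eᵢ` with probability `|xᵢ|/r`, and `0` with
probability `1 − ‖x‖₁/r`. Then `E[Z] = x`, and the average `Z̄` of `t` i.i.d. copies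
satisfies `E[‖Z̄ − x‖₂²] ≤ r²/t`. -/
theorem maurey_random_vector {d : ℕ} (x : EuclideanSpace ℝ (Fin d)) (r : ℝ) (hr : 0 < r)
    (hx : ∑ i, |x i| ≤ r)
    (μ : Measure (EuclideanSpace ℝ (Fin d)))
    (hμ : μ = (∑ i, ENNReal.ofReal (|x i| / r) •
          Measure.dirac (EuclideanSpace.single i (Real.sign (x i) * r))) +
        ENNReal.ofReal (1 - (∑ i, |x i|) / r) • Measure.dirac 0) :
    (∫ z, z ∂μ) = x ∧
      ∀ (Ω : Type) (_ : MeasurableSpace Ω) (P : Measure Ω), IsProbabilityMeasure P →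
        ∀ (t : ℕ), 0 < t →
          ∀ Z : Fin t → Ω → EuclideanSpace ℝ (Fin d),
            (∀ i, Measurable (Z i)) →
            iIndepFun Z P →
            (∀ i, Measure.map (Z i) P = μ) →
            ∫ ω, ‖(t : ℝ)⁻¹ • (∑ i, Z i ω) - x‖ ^ 2 ∂P ≤ r ^ 2 / t := by
  have hrne : r ≠ 0 := hr.ne'
  have hc : ∀ i : Fin d, 0 ≤ |x i| / r := fun i => by positivity
  have hA : (∑ i, |x i|) / r ≤ 1 := (div_le_one hr).mpr hx
  have hc' : 0 ≤ 1 - (∑ i, |x i|) / r := by linarith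
  have key : ∀ (g : EuclideanSpace ℝ (Fin d) → ℝ), StronglyMeasurable g →
      Integrable g μ ∧ (∫ z, g z ∂μ) =
        (∑ i, (|x i| / r) * g (EuclideanSpace.single i (Real.sign (x i) * r))) +
          (1 - (∑ i, |x i|) / r) * g 0 := by
    intro g hg
    rw [hμ]
    simpa [smul_eq_mul] using maurey_integral x r hc hc' g hg
  have keyE : Integrable (fun z : EuclideanSpace ℝ (Fin d) => z) μ ∧
      (∫ z, z ∂μ) =
        (∑ i, (|x i| / r) • EuclideanSpace.single i (Real.sign (x i) * r)) +
          (1 - (∑ i, |x i|) / r) • (0 : EuclideanSpace ℝ (Fin d)) := by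
    rw [hμ]
    exact maurey_integral x r hc hc' (fun z => z) (stronglyMeasurable_id)
  constructor
  · rw [keyE.2, smul_zero, add_zero]
    ext k
    exact ((congrFun (WithLp.ofLp_sum _ _ _ _) k).trans (Finset.sum_apply k Finset.univ _)).trans (maurey_coord x r hr k)
  · intro Ω mΩ P hP t ht Z hZm hZind hZmap
    have htR : (0 : ℝ) < t := by exact_mod_cast ht
    have htne : (t : ℝ) ≠ 0 := htR.ne'
    -- coordinate measurability
    have hcm : ∀ k : Fin d, Measurable fun z : EuclideanSpace ℝ (Fin d) => z k - x k :=
      fun k => ((measurable_pi_apply k).comp (WithLp.measurable_ofLp _ _)).sub measurable_const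
    have hg2m : ∀ k : Fin d, Measurable fun z : EuclideanSpace ℝ (Fin d) => (z k - x k) ^ 2 :=
      fun k => (hcm k).pow_const 2
    set Q : ℝ := ∑ k, (x k) ^ 2 with hQdef
    have hQ : 0 ≤ Q := by positivity
    set v : Fin d → ℝ := fun k => ∫ z, (z k - x k) ^ 2 ∂μ with hvdef
    -- formula for v k
    have hvformula : ∀ k, v k =
        (∑ i, (|x i| / r) * ((EuclideanSpace.single i (Real.sign (x i) * r)) k - x k) ^ 2) +
          (1 - (∑ i, |x i|) / r) * (x k) ^ 2 := by
      intro k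
      have h := (key (fun z => (z k - x k) ^ 2) (hg2m k).stronglyMeasurable).2
      simpa using h
    -- the variance bound: ∑ k v k ≤ r ^ 2
    have hinner : ∀ i, (∑ k, ((EuclideanSpace.single i (Real.sign (x i) * r)) k - x k) ^ 2) =
        Real.sign (x i) ^ 2 * r ^ 2 - 2 * r * |x i| + Q := by
      intro i
      have hterm : ∀ k, ((EuclideanSpace.single i (Real.sign (x i) * r)) k - x k) ^ 2 =
          (x k) ^ 2 + (if k = i then ((Real.sign (x i) * r - x i) ^ 2 - (x i) ^ 2) else 0) := by
        intro k
        rw [EuclideanSpace.single_apply]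
        by_cases h : k = i
        · subst h; rw [if_pos rfl, if_pos rfl]; ring
        · rw [if_neg h, if_neg h]; ring
      rw [Finset.sum_congr rfl fun k _ => hterm k, Finset.sum_add_distrib,
        Finset.sum_ite_eq' Finset.univ i _, if_pos (Finset.mem_univ i)]
      have h := sgn_mul_self (x i)
      rw [← hQdef]
      linear_combination (-2 : ℝ) * r * h
    have hVsum : (∑ k, v k) ≤ r ^ 2 := by
      have hsum : (∑ k, v k) =
          (∑ i, (|x i| / r) * (Real.sign (x i) ^ 2 * r ^ 2 - 2 * r * |x i| + Q)) +
            (1 - (∑ i, |x i|) / r) * Q := by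
        rw [Finset.sum_congr rfl fun k _ => hvformula k, Finset.sum_add_distrib]
        congr 1
        · rw [Finset.sum_comm]
          exact Finset.sum_congr rfl fun i _ => by rw [← Finset.mul_sum, hinner i]
        · rw [← Finset.mul_sum, ← hQdef]
      have hti : ∀ i : Fin d,
          (|x i| / r) * (Real.sign (x i) ^ 2 * r ^ 2 - 2 * r * |x i| + Q) ≤
            (|x i| / r) * (r ^ 2 + Q) - 2 * (x i) ^ 2 := by
        intro i
        have h1 : |x i| * Real.sign (x i) ^ 2 = |x i| := abs_mul_sgn_sq (x i)
        have h2 : |x i| ^ 2 = (x i) ^ 2 := sq_abs (x i)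
        have h3 : 0 ≤ |x i| := abs_nonneg _
        rw [div_mul_eq_mul_div, div_mul_eq_mul_div]
        have e : |x i| * (r ^ 2 + Q) / r - 2 * x i ^ 2 =
            (|x i| * (r ^ 2 + Q) - 2 * x i ^ 2 * r) / r := by
          field_simp
          try ring
        rw [e, div_le_div_iff_of_pos_right hr]
        nlinarith [sgn_sq_le_one (x i), sq_nonneg r]
      have hsum2 : (∑ i, ((|x i| / r) * (r ^ 2 + Q) - 2 * (x i) ^ 2)) =
          ((∑ i, |x i|) / r) * (r ^ 2 + Q) - 2 * Q := by
        rw [Finset.sum_sub_distrib, ← Finset.sum_mul, ← Finset.sum_div, ← Finset.mul_sum, hQdef]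
      calc (∑ k, v k)
          = (∑ i, (|x i| / r) * (Real.sign (x i) ^ 2 * r ^ 2 - 2 * r * |x i| + Q)) +
            (1 - (∑ i, |x i|) / r) * Q := hsum
        _ ≤ (∑ i, ((|x i| / r) * (r ^ 2 + Q) - 2 * (x i) ^ 2)) +
            (1 - (∑ i, |x i|) / r) * Q := by
            exact add_le_add_left (Finset.sum_le_sum fun i _ => hti i) _
        _ = ((∑ i, |x i|) / r) * (r ^ 2 + Q) - 2 * Q + (1 - (∑ i, |x i|) / r) * Q := by
            rw [hsum2]
        _ ≤ r ^ 2 := by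
            have h0 : 0 ≤ (∑ i, |x i|) / r := by positivity
            nlinarith [sq_nonneg r]
    -- probabilistic part
    set W : Fin t → Fin d → Ω → ℝ := fun i k ω => Z i ω k - x k with hWdef
    have hWm : ∀ i k, Measurable (W i k) := fun i k => (hcm k).comp (hZm i)
    have htrans : ∀ (i : Fin t) (g : EuclideanSpace ℝ (Fin d) → ℝ), Measurable g →
        Integrable (fun ω => g (Z i ω)) P ∧ (∫ ω, g (Z i ω) ∂P) = ∫ z, g z ∂μ := by
      intro i g hg
      have h1 : Integrable g (Measure.map (Z i) P) := by
        rw [hZmap i]; exact (key g hg.stronglyMeasurable).1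
      constructor
      · exact (integrable_map_measure hg.stronglyMeasurable.aestronglyMeasurable
          (hZm i).aemeasurable).mp h1
      · rw [← hZmap i]
        exact (integral_map (hZm i).aemeasurable
          hg.stronglyMeasurable.aestronglyMeasurable).symm
    have hWint : ∀ i k, Integrable (W i k) P := fun i k =>
      (htrans i (fun z => z k - x k) (hcm k)).1
    have hWmean : ∀ i k, (∫ ω, W i k ω ∂P) = 0 := by
      intro i k
      have h := (htrans i (fun z => z k - x k) (hcm k)).2
      have h2 : (∫ z, (z k - x k) ∂μ) = 0 := by
        have hf := (key (fun z => z k - x k) (hcm k).stronglyMeasurable).2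
        rw [hf]
        have e1 : (∑ i, (|x i| / r) *
            ((EuclideanSpace.single i (Real.sign (x i) * r)) k - x k)) =
            x k - ((∑ i, |x i|) / r) * x k := by
          rw [Finset.sum_congr rfl fun i _ => mul_sub _ _ _, Finset.sum_sub_distrib,
            ← Finset.sum_mul, ← Finset.sum_div, maurey_coord x r hr k]
        rw [e1]
        simp only [PiLp.zero_apply]
        ring
      exact h.trans h2
    have hWsq : ∀ i k, (∫ ω, W i k ω * W i k ω ∂P) = v k := by
      intro i k
      have h := (htrans i (fun z => (z k - x k) ^ 2) (hg2m k)).2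
      have e : (fun ω => W i k ω * W i k ω) = fun ω => (Z i ω k - x k) ^ 2 := by
        funext ω; rw [hWdef]; ring
      rw [e]
      exact h
    have hWsqint : ∀ i k, Integrable (fun ω => W i k ω * W i k ω) P := by
      intro i k
      have h := (htrans i (fun z => (z k - x k) ^ 2) (hg2m k)).1
      have e : (fun ω => W i k ω * W i k ω) = fun ω => (Z i ω k - x k) ^ 2 := by
        funext ω; rw [hWdef]; ring
      rw [e]
      exact h
    have hindW : ∀ (k : Fin d) (i j : Fin t), i ≠ j → IndepFun (W i k) (W j k) P := by
      intro k i j hij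
      exact (hZind.indepFun hij).comp (hcm k) (hcm k)
    have hcross : ∀ (k : Fin d) (i j : Fin t), i ≠ j →
        (∫ ω, W i k ω * W j k ω ∂P) = 0 := by
      intro k i j hij
      have h := (hindW k i j hij).integral_mul_eq_mul_integral (hWm i k).aestronglyMeasurable
        (hWm j k).aestronglyMeasurable
      have e : (fun ω => W i k ω * W j k ω) = W i k * W j k := rfl
      rw [e, h, hWmean i k, hWmean j k, mul_zero]
    have hprodint : ∀ (k : Fin d) (i j : Fin t),
        Integrable (fun ω => W i k ω * W j k ω) P := by
      intro k i j
      rcases eq_or_ne i j with rfl | hij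
      · exact hWsqint i k
      · have h := (hindW k i j hij).integrable_mul (hWint i k) (hWint j k)
        exact h
    -- pointwise identity
    have hnorm : ∀ y : EuclideanSpace ℝ (Fin d), ‖y‖ ^ 2 = ∑ k, (y k) ^ 2 := by
      intro y
      rw [EuclideanSpace.norm_eq, Real.sq_sqrt (by positivity)]
      simp [sq_abs]
    have hptwise : ∀ ω, ‖(t : ℝ)⁻¹ • (∑ i, Z i ω) - x‖ ^ 2 =
        (t : ℝ)⁻¹ ^ 2 * ∑ k, (∑ i, W i k ω) ^ 2 := by
      intro ω
      rw [hnorm, Finset.mul_sum]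
      refine Finset.sum_congr rfl fun k _ => ?_
      have hSk : ((∑ i, Z i ω) : EuclideanSpace ℝ (Fin d)) k = ∑ i, Z i ω k :=
        by rw [WithLp.ofLp_sum]; exact Finset.sum_apply k Finset.univ _
      have happ : (((t : ℝ)⁻¹ • (∑ i, Z i ω) - x) : EuclideanSpace ℝ (Fin d)) k =
          (t : ℝ)⁻¹ * (∑ i, Z i ω k) - x k := by
        rw [← hSk]; rfl
      rw [happ]
      have hsum : (∑ i, W i k ω) = (∑ i, Z i ω k) - t * x k := by
        simp only [hWdef, Finset.sum_sub_distrib, Finset.sum_const, Finset.card_univ,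
          Fintype.card_fin, nsmul_eq_mul]
      rw [hsum]
      field_simp
      try ring
    have hsq_expand : ∀ k, (fun ω => (∑ i, W i k ω) ^ 2) =
        fun ω => ∑ i, ∑ j, W i k ω * W j k ω := by
      intro k
      funext ω
      rw [sq, Finset.sum_mul_sum]
    have hsqint : ∀ k, Integrable (fun ω => (∑ i, W i k ω) ^ 2) P := by
      intro k
      rw [hsq_expand k]
      exact integrable_finset_sum _ fun i _ => integrable_finset_sum _ fun j _ =>
        hprodint k i j
    have hperk : ∀ k, (∫ ω, (∑ i, W i k ω) ^ 2 ∂P) = t * v k := by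
      intro k
      rw [hsq_expand k, integral_finset_sum _ fun i _ =>
        integrable_finset_sum _ fun j _ => hprodint k i j]
      have : ∀ i : Fin t, (∫ ω, ∑ j, W i k ω * W j k ω ∂P) = v k := by
        intro i
        rw [integral_finset_sum _ fun j _ => hprodint k i j]
        rw [Finset.sum_eq_single i]
        · exact hWsq i k
        · intro j _ hji
          exact hcross k i j (Ne.symm hji)
        · intro h; exact absurd (Finset.mem_univ i) h
      rw [Finset.sum_congr rfl fun i _ => this i, Finset.sum_const, Finset.card_univ,
        Fintype.card_fin, nsmul_eq_mul]
    calc (∫ ω, ‖(t : ℝ)⁻¹ • (∑ i, Z i ω) - x‖ ^ 2 ∂P)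
        = ∫ ω, (t : ℝ)⁻¹ ^ 2 * ∑ k, (∑ i, W i k ω) ^ 2 ∂P := by
          exact integral_congr_ae (Filter.Eventually.of_forall hptwise)
      _ = (t : ℝ)⁻¹ ^ 2 * ∫ ω, ∑ k, (∑ i, W i k ω) ^ 2 ∂P := integral_const_mul _ _
      _ = (t : ℝ)⁻¹ ^ 2 * ∑ k, ∫ ω, (∑ i, W i k ω) ^ 2 ∂P := by
          rw [integral_finset_sum _ fun k _ => hsqint k]
      _ = (t : ℝ)⁻¹ ^ 2 * ((t : ℝ) * ∑ k, v k) := by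
          rw [Finset.sum_congr rfl fun k _ => hperk k, ← Finset.mul_sum]
      _ ≤ (t : ℝ)⁻¹ ^ 2 * ((t : ℝ) * r ^ 2) := by
          have h1 : (t : ℝ) * (∑ k, v k) ≤ (t : ℝ) * r ^ 2 :=
            mul_le_mul_of_nonneg_left hVsum htR.le
          exact mul_le_mul_of_nonneg_left h1 (by positivity)
      _ = r ^ 2 / t := by field_simp
end

section
/- Let G₁ : ℝᵏ → ℝᵖ be L₁-Lipschitz and G₂ : ℝᵖ → ℝⁿ be L₂-Lipschitz. Then for δ > 0, K ≥ 1, and r₂ = Kδ/L₂, the covering number of the image set G₂(G₁(B₂ᵏ(r₁)) ⊕ B₁ᵖ(r₂)) at scale 2δ satisfies log N(2δ, G₂(G₁(B₂ᵏ(r₁)) ⊕ B₁ᵖ(r₂)), ‖·‖₂) ≤ k·log(4L₁L₂r₁/δ) + K²·log(2p+1). -/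
open scoped NNReal Pointwise

open MeasureTheory Metric Finset
open scoped ENNReal



-- card bound for separated sets
lemma sep_card_bound (k : ℕ) (r ε : ℝ) (hr : 0 ≤ r) (hε : 0 < ε)
    (t : Finset (EuclideanSpace ℝ (Fin k))) (hsub : ↑t ⊆ closedBall (0 : EuclideanSpace ℝ (Fin k)) r)
    (hsep : ∀ x ∈ t, ∀ y ∈ t, x ≠ y → ε < dist x y) :
    (t.card : ℝ) ≤ (2 * r / ε + 1) ^ k := by
  have hbase : (1:ℝ) ≤ 2 * r / ε + 1 := by
    have : 0 ≤ 2 * r / ε := by positivity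
    linarith
  rcases Nat.eq_zero_or_pos k with hk | hk
  · subst hk
    have : t.card ≤ 1 := Finset.card_le_one.mpr (fun a _ b _ => Subsingleton.elim a b)
    simp only [pow_zero]
    exact_mod_cast this
  · haveI : Nonempty (Fin k) := ⟨⟨0, hk⟩⟩
    haveI : Nontrivial (EuclideanSpace ℝ (Fin k)) := inferInstance
    have hdisj : Set.PairwiseDisjoint (↑t : Set (EuclideanSpace ℝ (Fin k))) (fun x => ball x (ε/2)) := by
      intro x hx y hy hxy
      apply ball_disjoint_ball
      have := hsep x (Finset.mem_coe.mp hx) y (Finset.mem_coe.mp hy) hxy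
      linarith
    have hmeas := measure_biUnion_finset (μ := volume) hdisj (fun b _ => measurableSet_ball)
    have hsub2 : (⋃ x ∈ t, ball x (ε/2)) ⊆ ball (0:EuclideanSpace ℝ (Fin k)) (r + ε/2) := by
      intro z hz
      simp only [Set.mem_iUnion] at hz
      obtain ⟨x, hx, hzx⟩ := hz
      have h1 : dist x 0 ≤ r := mem_closedBall.mp (hsub hx)
      have h2 : dist z x < ε/2 := mem_ball.mp hzx
      have : dist z 0 < r + ε/2 := by
        calc dist z 0 ≤ dist z x + dist x 0 := dist_triangle _ _ _
        _ < r + ε/2 := by linarith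
      exact mem_ball.mpr this
    set c := volume (ball (0:EuclideanSpace ℝ (Fin k)) 1) with hc
    have hball : ∀ x : EuclideanSpace ℝ (Fin k), volume (ball x (ε/2)) = ENNReal.ofReal ((ε/2)^k) * c := by
      intro x
      have := MeasureTheory.Measure.addHaar_ball (volume : Measure (EuclideanSpace ℝ (Fin k))) x (by linarith : (0:ℝ) ≤ ε/2)
      simpa [finrank_euclideanSpace_fin] using this
    have hballR : volume (ball (0:EuclideanSpace ℝ (Fin k)) (r + ε/2)) = ENNReal.ofReal ((r+ε/2)^k) * c := by
      have := MeasureTheory.Measure.addHaar_ball (volume : Measure (EuclideanSpace ℝ (Fin k))) (0:EuclideanSpace ℝ (Fin k)) (by linarith : (0:ℝ) ≤ r + ε/2)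
      simpa [finrank_euclideanSpace_fin] using this
    have hc0 : c ≠ 0 := (measure_ball_pos _ _ one_pos).ne'
    have hctop : c ≠ ⊤ := measure_ball_lt_top.ne
    have key : (t.card : ℝ≥0∞) * ENNReal.ofReal ((ε/2)^k) * c ≤ ENNReal.ofReal ((r+ε/2)^k) * c := by
      rw [mul_assoc]
      calc (t.card : ℝ≥0∞) * (ENNReal.ofReal ((ε/2)^k) * c)
          = ∑ x ∈ t, volume (ball x (ε/2)) := by
            rw [Finset.sum_congr rfl (fun x _ => hball x), Finset.sum_const, nsmul_eq_mul]
        _ = volume (⋃ x ∈ t, ball x (ε/2)) := hmeas.symm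
        _ ≤ volume (ball (0:EuclideanSpace ℝ (Fin k)) (r + ε/2)) := measure_mono hsub2
        _ = _ := hballR
    have key2 : (t.card : ℝ≥0∞) * ENNReal.ofReal ((ε/2)^k) ≤ ENNReal.ofReal ((r+ε/2)^k) :=
      (ENNReal.mul_le_mul_iff_left hc0 hctop).mp key
    have hεp : (0:ℝ) < (ε/2)^k := by positivity
    have key3 : (t.card : ℝ) * (ε/2)^k ≤ (r+ε/2)^k := by
      have : ENNReal.ofReal ((t.card : ℝ) * (ε/2)^k) ≤ ENNReal.ofReal ((r+ε/2)^k) := by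
        rw [ENNReal.ofReal_mul (by positivity)]
        simpa [ENNReal.ofReal_natCast] using key2
      exact (ENNReal.ofReal_le_ofReal_iff (by positivity)).mp this
    have : (t.card : ℝ) ≤ ((r+ε/2)/(ε/2))^k := by
      rw [div_pow, le_div_iff₀ hεp]
      exact key3
    convert this using 2
    field_simp

lemma euclidean_net (k : ℕ) (r ε : ℝ) (hr : 0 ≤ r) (hε : 0 < ε) :
    ∃ S : Finset (EuclideanSpace ℝ (Fin k)),
      ↑S ⊆ closedBall (0 : EuclideanSpace ℝ (Fin k)) r ∧
      (∀ x ∈ closedBall (0 : EuclideanSpace ℝ (Fin k)) r, ∃ y ∈ S, dist x y ≤ ε) ∧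
      (S.card : ℝ) ≤ (2 * r / ε + 1) ^ k := by
  classical
  set A : Set ℕ := {m | ∃ t : Finset (EuclideanSpace ℝ (Fin k)),
    ↑t ⊆ closedBall (0 : EuclideanSpace ℝ (Fin k)) r ∧
    (∀ x ∈ t, ∀ y ∈ t, x ≠ y → ε < dist x y) ∧ t.card = m} with hA
  have hA0 : (0:ℕ) ∈ A := ⟨∅, by simp, by simp, by simp⟩
  have hbdd : BddAbove A := by
    refine ⟨Nat.ceil ((2 * r / ε + 1) ^ k), ?_⟩
    rintro m ⟨t, hsub, hsep, rfl⟩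
    have := sep_card_bound k r ε hr hε t hsub hsep
    exact_mod_cast le_trans this (Nat.le_ceil _)
  obtain ⟨t, hsub, hsep, hcard⟩ := Nat.sSup_mem ⟨0, hA0⟩ hbdd
  refine ⟨t, hsub, ?_, ?_⟩
  · intro x hx
    by_contra hcon
    push_neg at hcon
    have hxt : x ∉ t := fun hxt => by
      have := hcon x hxt
      rw [dist_self] at this
      linarith
    have hins : ↑(insert x t) ⊆ closedBall (0 : EuclideanSpace ℝ (Fin k)) r := by
      rw [Finset.coe_insert]
      exact Set.insert_subset hx hsub
    have hsep2 : ∀ a ∈ insert x t, ∀ b ∈ insert x t, a ≠ b → ε < dist a b := by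
      intro a ha b hb hab
      rcases Finset.mem_insert.mp ha with ha' | ha' <;>
        rcases Finset.mem_insert.mp hb with hb' | hb'
      · exact absurd (ha'.trans hb'.symm) hab
      · subst ha'; exact hcon b hb'
      · subst hb'; rw [dist_comm]; exact hcon a ha'
      · exact hsep a ha' b hb' hab
    have : t.card + 1 ∈ A := ⟨insert x t, hins, hsep2, by
      rw [Finset.card_insert_of_notMem hxt]⟩
    have hle := le_csSup hbdd this
    omega
  · exact sep_card_bound k r ε hr hε _ hsub hsep


namespace MaureyAux

variable {p : ℕ}

noncomputable def Nsq (y : EuclideanSpace ℝ (Fin p)) : ℝ := ∑ i, (y i)^2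

lemma norm_eq_sqrt_Nsq (y : EuclideanSpace ℝ (Fin p)) : ‖y‖ = Real.sqrt (Nsq y) := by
  rw [EuclideanSpace.norm_eq]; congr 1; simp [Nsq, sq_abs]

lemma Nsq_nonneg (y : EuclideanSpace ℝ (Fin p)) : 0 ≤ Nsq y :=
  Finset.sum_nonneg fun i _ => sq_nonneg _

lemma norm_le_of_Nsq_le {y : EuclideanSpace ℝ (Fin p)} {c : ℝ} (hc : 0 ≤ c)
    (h : Nsq y ≤ c^2) : ‖y‖ ≤ c := by
  rw [norm_eq_sqrt_Nsq]
  calc Real.sqrt (Nsq y) ≤ Real.sqrt (c^2) := Real.sqrt_le_sqrt h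
  _ = c := Real.sqrt_sq hc

lemma coord_sum {ι : Type*} (s : Finset ι) (v : ι → EuclideanSpace ℝ (Fin p)) (i : Fin p) :
    (∑ j ∈ s, v j) i = ∑ j ∈ s, v j i := by
  classical
  induction s using Finset.induction with
  | empty => rfl
  | insert _ _ h ih => rw [Finset.sum_insert h, Finset.sum_insert h, ← ih]; rfl

lemma Nsq_add_single (y : EuclideanSpace ℝ (Fin p)) (i : Fin p) (c : ℝ) :
    Nsq (y + EuclideanSpace.single i c) = Nsq y + 2*c*(y i) + c^2 := by
  classical
  unfold Nsq
  have h1 : ∀ j, ((y + EuclideanSpace.single i c) j)^2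
      = (y j)^2 + (if j = i then 2*c*(y j) + c^2 else 0) := by
    intro j
    have e1 : (y + EuclideanSpace.single i c) j = y j + (EuclideanSpace.single i c) j := rfl
    rw [e1, EuclideanSpace.single_apply]
    split <;> ring
  rw [Finset.sum_congr rfl (fun j _ => h1 j), Finset.sum_add_distrib,
    Finset.sum_ite_eq' Finset.univ i (fun j => 2*c*(y j) + c^2)]
  simp only [Finset.mem_univ, if_true]
  ring

lemma Nsq_smul (c : ℝ) (y : EuclideanSpace ℝ (Fin p)) : Nsq (c • y) = c^2 * Nsq y := by
  unfold Nsq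
  rw [Finset.mul_sum]
  refine Finset.sum_congr rfl fun i _ => ?_
  have : (c • y) i = c * y i := rfl
  rw [this]; ring

-- the sample options
noncomputable def g (r : ℝ) : Option (Fin p × Bool) → EuclideanSpace ℝ (Fin p)
  | none => 0
  | some (i, b) => EuclideanSpace.single i (if b then r else -r)

lemma l1_g (r : ℝ) (hr : 0 ≤ r) (o : Option (Fin p × Bool)) : ∑ i, |g r o i| ≤ r := by
  classical
  match o with
  | none =>
    have : ∀ i : Fin p, |g r none i| = 0 := fun i => by simp [g]
    rw [Finset.sum_congr rfl (fun j _ => this j)]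
    simpa using hr
  | some (i, b) =>
    have : ∀ j, |g r (some (i,b)) j| = if j = i then |if b then r else -r| else 0 := by
      intro j
      show |(EuclideanSpace.single i (if b then r else -r)) j| = _
      rw [EuclideanSpace.single_apply]
      split <;> simp
    rw [Finset.sum_congr rfl (fun j _ => this j),
      Finset.sum_ite_eq' Finset.univ i (fun _ => |if b then r else -r|)]
    simp only [Finset.mem_univ, if_true]
    cases b <;> simp [abs_of_nonneg hr]

lemma exists_le_of_weighted {ι : Type*} [Fintype ι] (w a : ι → ℝ)
    (hw0 : ∀ i, 0 ≤ w i) (hw1 : ∑ i, w i = 1) (B : ℝ)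
    (hid : ∑ i, w i * a i ≤ B) : ∃ i, a i ≤ B := by
  classical
  by_contra hcon
  push_neg at hcon
  obtain ⟨i0, hi0⟩ : ∃ i, 0 < w i := by
    by_contra hall
    push_neg at hall
    have : ∑ i, w i ≤ 0 := Finset.sum_nonpos (fun i _ => hall i)
    rw [hw1] at this; linarith
  have h1 : ∑ i, w i * B < ∑ i, w i * a i := by
    refine Finset.sum_lt_sum (fun i _ => ?_) ⟨i0, Finset.mem_univ i0, ?_⟩
    · exact mul_le_mul_of_nonneg_left (le_of_lt (hcon i)) (hw0 i)
    · exact (mul_lt_mul_iff_right₀ hi0).mpr (hcon i0)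
  rw [← Finset.sum_mul, hw1, one_mul] at h1
  linarith

noncomputable def cc (r : ℝ) (x : EuclideanSpace ℝ (Fin p)) (i : Fin p) : ℝ :=
  if 0 ≤ x i then r else -r

noncomputable def amap (x : EuclideanSpace ℝ (Fin p)) (o : Option (Fin p)) :
    Option (Fin p × Bool) := o.map (fun i => (i, decide (0 ≤ x i)))

lemma g_amap (r : ℝ) (x : EuclideanSpace ℝ (Fin p)) (i : Fin p) :
    g r (amap x (some i)) = EuclideanSpace.single i (cc r x i) := by
  by_cases h : 0 ≤ x i <;> simp [g, amap, cc, h]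

lemma g_amap_none (r : ℝ) (x : EuclideanSpace ℝ (Fin p)) : g r (amap x none) = 0 := rfl

lemma identity {r : ℝ} (hr : 0 < r) (x e : EuclideanSpace ℝ (Fin p)) :
    ∑ i, (|x i|/r) * Nsq (e - x + EuclideanSpace.single i (cc r x i))
      + (1 - (∑ i, |x i|)/r) * Nsq (e - x)
    = Nsq e + (r * (∑ i, |x i|) - Nsq x) := by
  classical
  have hterm : ∀ i, (|x i|/r) * Nsq (e - x + EuclideanSpace.single i (cc r x i))
      = (|x i|/r) * Nsq (e - x) + 2*(x i)*((e - x) i) + (|x i|) * r := by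
    intro i
    rw [Nsq_add_single]
    by_cases h : 0 ≤ x i
    · rw [cc, if_pos h, abs_of_nonneg h]
      field_simp
    · rw [cc, if_neg h, abs_of_neg (lt_of_not_ge h)]
      field_simp
      ring
  rw [Finset.sum_congr rfl (fun i _ => hterm i)]
  rw [Finset.sum_add_distrib, Finset.sum_add_distrib, ← Finset.sum_mul, ← Finset.sum_div]
  have hkey : Nsq (e - x) + 2*(∑ i, x i * ((e - x) i)) = Nsq e - Nsq x := by
    unfold Nsq
    rw [Finset.mul_sum, ← Finset.sum_add_distrib, ← Finset.sum_sub_distrib]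
    refine Finset.sum_congr rfl fun i _ => ?_
    have hv : (e - x) i = e i - x i := rfl
    rw [hv]
    ring
  have h2 : ∑ i, 2*(x i)*((e - x) i) = 2*(∑ i, x i * ((e - x) i)) := by
    rw [Finset.mul_sum]
    exact Finset.sum_congr rfl fun i _ => by ring
  rw [h2]
  have h3 : ∑ i, (|x i|) * r = (∑ i, |x i|) * r := (Finset.sum_mul ..).symm
  rw [h3]
  linarith [hkey]

lemma step {r : ℝ} (hr : 0 < r) (x : EuclideanSpace ℝ (Fin p)) (hx : ∑ i, |x i| ≤ r)
    (e : EuclideanSpace ℝ (Fin p)) :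
    ∃ o : Option (Fin p × Bool),
      Nsq (e - x + g r o) ≤ Nsq e + (r * (∑ i, |x i|) - Nsq x) := by
  classical
  set w : Option (Fin p) → ℝ := fun o =>
    match o with
    | none => 1 - (∑ i, |x i|)/r
    | some i => |x i|/r with hw
  have hw0 : ∀ o, 0 ≤ w o := by
    intro o
    match o with
    | none =>
      have : (∑ i, |x i|)/r ≤ 1 := by
        rw [div_le_one hr]; exact hx
      simp only [hw]; linarith
    | some i => simp only [hw]; positivity
  have hw1 : ∑ o : Option (Fin p), w o = 1 := by
    rw [Fintype.sum_option]
    simp only [hw]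
    rw [← Finset.sum_div]
    ring
  have hid : ∑ o : Option (Fin p), w o * Nsq (e - x + g r (amap x o))
      = Nsq e + (r * (∑ i, |x i|) - Nsq x) := by
    rw [Fintype.sum_option]
    have e0 : w none * Nsq (e - x + g r (amap x none))
        = (1 - (∑ i, |x i|)/r) * Nsq (e - x) := by
      rw [g_amap_none, add_zero]
    have e1 : ∀ i, w (some i) * Nsq (e - x + g r (amap x (some i)))
        = (|x i|/r) * Nsq (e - x + EuclideanSpace.single i (cc r x i)) := by
      intro i; rw [g_amap]
    rw [e0, Finset.sum_congr rfl (fun i _ => e1 i)]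
    rw [add_comm]
    exact identity hr x e
  obtain ⟨o, ho⟩ := exists_le_of_weighted w
    (fun o => Nsq (e - x + g r (amap x o))) hw0 hw1 _ (le_of_eq hid)
  exact ⟨amap x o, ho⟩

lemma maurey_exists {r : ℝ} (hr : 0 < r) (x : EuclideanSpace ℝ (Fin p))
    (hx : ∑ i, |x i| ≤ r) (t : ℕ) :
    ∃ f : Fin t → Option (Fin p × Bool),
      Nsq ((∑ j, g r (f j)) - (t:ℝ) • x) ≤ t * (r * (∑ i, |x i|) - Nsq x) := by
  induction t with
  | zero =>
    refine ⟨fun j => none, ?_⟩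
    have : (∑ j : Fin 0, g r none) - ((0:ℕ):ℝ) • x = 0 := by simp
    rw [this]
    simp [Nsq]
  | succ t ih =>
    obtain ⟨f, hf⟩ := ih
    obtain ⟨o, ho⟩ := step hr x hx ((∑ j, g r (f j)) - (t:ℝ) • x)
    refine ⟨(Fin.snoc f o : Fin (t+1) → Option (Fin p × Bool)), ?_⟩
    have hsum : (∑ j : Fin (t+1), g r ((Fin.snoc f o : Fin (t+1) → Option (Fin p × Bool)) j))
        = (∑ j : Fin t, g r (f j)) + g r o := by
      rw [Fin.sum_univ_castSucc]
      congr 1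
      · exact Finset.sum_congr rfl fun j _ => by rw [Fin.snoc_castSucc]
      · rw [Fin.snoc_last]
    have hrw : (∑ j : Fin (t+1), g r ((Fin.snoc f o : Fin (t+1) → Option (Fin p × Bool)) j)) - ((t+1:ℕ):ℝ) • x
        = ((∑ j : Fin t, g r (f j)) - (t:ℝ) • x) - x + g r o := by
      rw [hsum]
      push_cast
      rw [add_smul, one_smul]
      abel
    rw [hrw]
    calc Nsq _ ≤ Nsq ((∑ j : Fin t, g r (f j)) - (t:ℝ) • x) + (r * (∑ i, |x i|) - Nsq x) := ho
    _ ≤ t * (r * (∑ i, |x i|) - Nsq x) + (r * (∑ i, |x i|) - Nsq x) := by linarith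
    _ = ((t+1:ℕ):ℝ) * (r * (∑ i, |x i|) - Nsq x) := by push_cast; ring

lemma Nsq_neg (u : EuclideanSpace ℝ (Fin p)) : Nsq (-u) = Nsq u := by
  unfold Nsq
  refine Finset.sum_congr rfl fun i _ => ?_
  have : (-u) i = -(u i) := rfl
  rw [this]; ring

end MaureyAux

open MaureyAux in
lemma l1_net (p : ℕ) (r K : ℝ) (hr : 0 < r) (hK : 1 ≤ K) :
    ∃ S : Finset (EuclideanSpace ℝ (Fin p)), ↑S ⊆ l1Ball p r ∧
      (∀ x ∈ l1Ball p r, ∃ y ∈ S, dist x y ≤ r / K) ∧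
      ((S.card : ℝ) ≤ (2*(p:ℝ)+1) ^ (K^2 : ℝ)) := by
  classical
  have hK0 : 0 < K := lt_of_lt_of_le one_pos hK
  have hK2 : 1 ≤ K^2 := by nlinarith
  set m : ℕ := ⌈K^2⌉₊ - 1 with hm
  have hceil1 : 1 ≤ ⌈K^2⌉₊ := Nat.one_le_ceil_iff.mpr (by linarith)
  have hm1 : m + 1 = ⌈K^2⌉₊ := by omega
  have hmle : (m:ℝ) ≤ K^2 := by
    have h1 : (⌈K^2⌉₊ : ℝ) < K^2 + 1 := Nat.ceil_lt_add_one (by linarith)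
    have h2 : (m:ℝ) = (⌈K^2⌉₊ : ℝ) - 1 := by
      rw [← hm1]; push_cast; ring
    linarith
  have hup : K^2 ≤ (m:ℝ) + 1 := by
    have h1 : K^2 ≤ (⌈K^2⌉₊ : ℝ) := Nat.le_ceil _
    rw [← hm1] at h1; push_cast at h1; linarith
  set F : (Fin m → Option (Fin p × Bool)) → EuclideanSpace ℝ (Fin p) :=
    fun f => (m:ℝ)⁻¹ • ∑ j, g r (f j) with hF
  set S : Finset (EuclideanSpace ℝ (Fin p)) := Finset.image F Finset.univ with hS
  have hrK : 0 ≤ r / K := le_of_lt (div_pos hr hK0)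
  refine ⟨S, ?_, ?_, ?_⟩
  · -- S ⊆ l1Ball p r
    intro y hy
    obtain ⟨f, _, rfl⟩ := Finset.mem_image.mp hy
    show ∑ i, |F f i| ≤ r
    have hcoord : ∀ i, F f i = (m:ℝ)⁻¹ * ((∑ j, g r (f j)) i) := fun i => rfl
    have habs : ∀ i, |F f i| = (m:ℝ)⁻¹ * |(∑ j, g r (f j)) i| := by
      intro i
      rw [hcoord i, abs_mul, abs_of_nonneg (by positivity : (0:ℝ) ≤ (m:ℝ)⁻¹)]
    rw [Finset.sum_congr rfl (fun i _ => habs i), ← Finset.mul_sum]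
    have hbound : ∑ i, |(∑ j, g r (f j)) i| ≤ (m:ℝ) * r := by
      have h1 : ∀ i, |(∑ j, g r (f j)) i| ≤ ∑ j, |g r (f j) i| := by
        intro i
        rw [coord_sum]
        exact Finset.abs_sum_le_sum_abs _ _
      calc ∑ i, |(∑ j, g r (f j)) i| ≤ ∑ i, ∑ j, |g r (f j) i| :=
            Finset.sum_le_sum (fun i _ => h1 i)
      _ = ∑ j, ∑ i, |g r (f j) i| := Finset.sum_comm
      _ ≤ ∑ _j : Fin m, r := Finset.sum_le_sum (fun j _ => l1_g r (le_of_lt hr) (f j))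
      _ = (m:ℝ) * r := by rw [Finset.sum_const]; simp [nsmul_eq_mul]
    calc (m:ℝ)⁻¹ * ∑ i, |(∑ j, g r (f j)) i| ≤ (m:ℝ)⁻¹ * ((m:ℝ) * r) := by
          apply mul_le_mul_of_nonneg_left hbound (by positivity)
    _ ≤ r := by
        rcases Nat.eq_zero_or_pos m with h | h
        · simp [h]; linarith
        · have : (0:ℝ) < (m:ℝ) := by exact_mod_cast h
          rw [inv_mul_cancel_left₀ (ne_of_gt this)]
  · -- covering
    intro x hx
    have hS₁ : ∑ i, |x i| ≤ r := hx
    have hx2 : Nsq x ≤ r * (∑ i, |x i|) := by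
      unfold Nsq
      rw [Finset.mul_sum]
      refine Finset.sum_le_sum fun i _ => ?_
      have h1 : |x i| ≤ ∑ j, |x j| :=
        Finset.single_le_sum (f := fun j => |x j|) (fun j _ => abs_nonneg _) (Finset.mem_univ i)
      have h2 : |x i| ≤ r := le_trans h1 hS₁
      calc (x i)^2 = |x i| * |x i| := by rw [← abs_mul, abs_mul_self]; ring
      _ ≤ r * |x i| := mul_le_mul_of_nonneg_right h2 (abs_nonneg _)
    by_cases hcase : Nsq x ≤ (r/K)^2
    · refine ⟨0, ?_, ?_⟩
      · apply Finset.mem_image.mpr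
        refine ⟨fun _ => none, Finset.mem_univ _, ?_⟩
        show F (fun _ => none) = 0
        rw [hF]
        have hz : ∀ j : Fin m, g r ((fun _ => (none : Option (Fin p × Bool))) j)
            = (0 : EuclideanSpace ℝ (Fin p)) := fun j => rfl
        simp only []
        rw [Finset.sum_congr rfl (fun j _ => hz j), Finset.sum_const, smul_zero, smul_zero]
      · rw [dist_eq_norm, sub_zero]
        exact norm_le_of_Nsq_le hrK hcase
    · push_neg at hcase
      have hmpos : 0 < m := by
        rcases Nat.eq_zero_or_pos m with h | h
        · exfalso
          have : K^2 ≤ 1 := by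
            have := hup; rw [h] at this; push_cast at this; linarith
          have hKeq : K = 1 := le_antisymm (by nlinarith) hK
          rw [hKeq] at hcase
          simp at hcase
          nlinarith
        · exact h
      have hmR : (0:ℝ) < (m:ℝ) := by exact_mod_cast hmpos
      obtain ⟨f, hf⟩ := maurey_exists hr x hS₁ m
      refine ⟨F f, Finset.mem_image.mpr ⟨f, Finset.mem_univ _, rfl⟩, ?_⟩
      have hVm : r * (∑ i, |x i|) - Nsq x ≤ (m:ℝ) * (r/K)^2 := by
        have h1 : (r/K)^2 * K^2 = r^2 := by
          field_simp
        nlinarith [hx2, hcase, hup, sq_nonneg (r/K)]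
      have hxy : x - F f = (m:ℝ)⁻¹ • ((m:ℝ) • x - ∑ j, g r (f j)) := by
        rw [smul_sub, inv_smul_smul₀ (ne_of_gt hmR), hF]
      have hNxy : Nsq (x - F f) ≤ (r/K)^2 := by
        rw [hxy, Nsq_smul]
        have hneg : Nsq ((m:ℝ) • x - ∑ j, g r (f j)) = Nsq ((∑ j, g r (f j)) - (m:ℝ) • x) := by
          rw [← Nsq_neg ((∑ j, g r (f j)) - (m:ℝ) • x), neg_sub]
        rw [hneg]
        calc ((m:ℝ)⁻¹)^2 * Nsq ((∑ j, g r (f j)) - (m:ℝ) • x)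
            ≤ ((m:ℝ)⁻¹)^2 * ((m:ℝ) * (r * (∑ i, |x i|) - Nsq x)) := by
              apply mul_le_mul_of_nonneg_left hf (by positivity)
        _ ≤ ((m:ℝ)⁻¹)^2 * ((m:ℝ) * ((m:ℝ) * (r/K)^2)) := by
              apply mul_le_mul_of_nonneg_left
                (mul_le_mul_of_nonneg_left hVm (le_of_lt hmR)) (by positivity)
        _ = (r/K)^2 := by
              field_simp
      rw [dist_eq_norm]
      exact norm_le_of_Nsq_le hrK hNxy
  · -- card bound
    have h1 : S.card ≤ (2*p+1)^m := by
      calc S.card ≤ (Finset.univ : Finset (Fin m → Option (Fin p × Bool))).card :=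
            Finset.card_image_le
      _ = (2*p+1)^m := by
            rw [Finset.card_univ, Fintype.card_fun, Fintype.card_option, Fintype.card_prod,
              Fintype.card_fin, Fintype.card_bool, Fintype.card_fin]
            ring
    have h2 : ((2*p+1:ℕ):ℝ) ^ (m:ℕ) ≤ (2*(p:ℝ)+1) ^ (K^2 : ℝ) := by
      have hb : (1:ℝ) ≤ 2*(p:ℝ)+1 := by
        have : (0:ℝ) ≤ (p:ℝ) := Nat.cast_nonneg p
        linarith
      have : ((2*p+1:ℕ):ℝ) = 2*(p:ℝ)+1 := by push_cast; ring
      rw [this, ← Real.rpow_natCast (2*(p:ℝ)+1) m]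
      exact Real.rpow_le_rpow_of_exponent_le hb hmle
    calc (S.card : ℝ) ≤ ((2*p+1:ℕ):ℝ) ^ (m:ℕ) := by exact_mod_cast h1
    _ ≤ _ := h2



/-- Covering number of the image of the extended range: for `G₁` `L₁`-Lipschitz and `G₂`
`L₂`-Lipschitz, `r₂ = Kδ/L₂`,
`log N(2δ, G₂(G₁(B₂ᵏ(r₁)) ⊕ B₁ᵖ(r₂)), ‖·‖₂) ≤ k log(4L₁L₂r₁/δ) + K² log(2p+1)`. -/
theorem covering_extended_range {k p n : ℕ}
    (G₁ : EuclideanSpace ℝ (Fin k) → EuclideanSpace ℝ (Fin p))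
    (G₂ : EuclideanSpace ℝ (Fin p) → EuclideanSpace ℝ (Fin n))
    (L₁ L₂ : ℝ≥0) (hL₁ : 0 < L₁) (hL₂ : 0 < L₂)
    (hG₁ : LipschitzWith L₁ G₁) (hG₂ : LipschitzWith L₂ G₂)
    (r₁ r₂ δ K : ℝ) (hr₁ : 0 < r₁) (hδ : 0 < δ) (hK : 1 ≤ K)
    (hδr : δ ≤ 2 * (L₁ * L₂ * r₁)) (hr₂ : r₂ = K * δ / L₂) :
    coveringNumber (2 * δ)
        (G₂ '' (G₁ '' Metric.closedBall (0 : EuclideanSpace ℝ (Fin k)) r₁ + l1Ball p r₂)) ≠ ⊤ ∧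
      Real.log ((coveringNumber (2 * δ)
          (G₂ '' (G₁ '' Metric.closedBall (0 : EuclideanSpace ℝ (Fin k)) r₁ +
            l1Ball p r₂))).toNat) ≤
        k * Real.log (4 * L₁ * L₂ * r₁ / δ) + K ^ 2 * Real.log (2 * p + 1) := by
  classical
  have hL1 : (0:ℝ) < (L₁:ℝ) := hL₁
  have hL2 : (0:ℝ) < (L₂:ℝ) := hL₂
  have hK0 : (0:ℝ) < K := lt_of_lt_of_le one_pos hK
  set ε : ℝ := δ / ((L₁:ℝ) * (L₂:ℝ)) with hε
  have hεpos : 0 < ε := by rw [hε]; positivity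
  obtain ⟨S₁, hS₁sub, hS₁cov, hS₁card⟩ := euclidean_net k r₁ ε (le_of_lt hr₁) hεpos
  have hr₂0 : 0 < r₂ := by rw [hr₂]; positivity
  obtain ⟨S₂, hS₂sub, hS₂cov, hS₂card⟩ := l1_net p r₂ K hr₂0 hK
  have hr2K : r₂ / K = δ / (L₂:ℝ) := by
    rw [hr₂]
    field_simp
  set T : Set (EuclideanSpace ℝ (Fin n)) :=
    G₂ '' (G₁ '' Metric.closedBall (0 : EuclideanSpace ℝ (Fin k)) r₁ + l1Ball p r₂) with hT
  set S : Finset (EuclideanSpace ℝ (Fin n)) :=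
    Finset.image₂ (fun a b => G₂ (G₁ a + b)) S₁ S₂ with hS
  have hsub : ↑S ⊆ T := by
    intro z hz
    obtain ⟨a, ha, b, hb, rfl⟩ := Finset.mem_image₂.mp hz
    exact Set.mem_image_of_mem G₂
      (Set.add_mem_add (Set.mem_image_of_mem G₁ (hS₁sub ha)) (hS₂sub hb))
  have hcov : ∀ z ∈ T, ∃ y ∈ S, dist z y ≤ 2 * δ := by
    intro z hz
    obtain ⟨w, hw, rfl⟩ := hz
    obtain ⟨u, hu, v, hv, rfl⟩ := Set.mem_add.mp hw
    obtain ⟨a₀, ha₀, rfl⟩ := hu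
    obtain ⟨a', ha', haa⟩ := hS₁cov a₀ ha₀
    obtain ⟨b', hb', hbb⟩ := hS₂cov v hv
    refine ⟨G₂ (G₁ a' + b'), Finset.mem_image₂_of_mem ha' hb', ?_⟩
    have h1 : dist (G₂ (G₁ a₀ + v)) (G₂ (G₁ a' + b')) ≤ (L₂:ℝ) * dist (G₁ a₀ + v) (G₁ a' + b') :=
      hG₂.dist_le_mul _ _
    have h2 : dist (G₁ a₀ + v) (G₁ a' + b') ≤ dist (G₁ a₀) (G₁ a') + dist v b' :=
      dist_add_add_le _ _ _ _
    have h3 : dist (G₁ a₀) (G₁ a') ≤ (L₁:ℝ) * dist a₀ a' := hG₁.dist_le_mul _ _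
    have h4 : (L₁:ℝ) * dist a₀ a' ≤ (L₁:ℝ) * ε :=
      mul_le_mul_of_nonneg_left haa (le_of_lt hL1)
    have h5 : (L₁:ℝ) * ε = δ / (L₂:ℝ) := by
      rw [hε]
      field_simp
    have h6 : dist v b' ≤ δ / (L₂:ℝ) := by rw [← hr2K]; exact hbb
    have h7 : dist (G₁ a₀ + v) (G₁ a' + b') ≤ 2 * δ / (L₂:ℝ) := by
      have := le_trans h3 h4
      rw [h5] at this
      calc dist (G₁ a₀ + v) (G₁ a' + b') ≤ dist (G₁ a₀) (G₁ a') + dist v b' := h2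
      _ ≤ δ / (L₂:ℝ) + δ / (L₂:ℝ) := add_le_add this h6
      _ = 2 * δ / (L₂:ℝ) := by ring
    calc dist (G₂ (G₁ a₀ + v)) (G₂ (G₁ a' + b')) ≤ (L₂:ℝ) * dist (G₁ a₀ + v) (G₁ a' + b') := h1
    _ ≤ (L₂:ℝ) * (2 * δ / (L₂:ℝ)) := mul_le_mul_of_nonneg_left h7 (le_of_lt hL2)
    _ = 2 * δ := by field_simp
  have hle : coveringNumber (2 * δ) T ≤ (S.card : ℕ∞) := by
    unfold _root_.coveringNumber
    exact iInf_le_of_le S (iInf_le _ ⟨hsub, hcov⟩)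
  have hne : coveringNumber (2 * δ) T ≠ ⊤ := by
    intro h
    rw [h] at hle
    exact absurd (top_le_iff.mp hle) (by simp)
  refine ⟨hne, ?_⟩
  -- numeric bounds
  have hbase1 : (1:ℝ) ≤ 2 * (L₁:ℝ) * (L₂:ℝ) * r₁ / δ := by
    rw [le_div_iff₀ hδ]
    have : δ ≤ 2 * ((L₁:ℝ) * (L₂:ℝ) * r₁) := by exact_mod_cast hδr
    linarith
  have hb1 : (S₁.card : ℝ) ≤ (4 * (L₁:ℝ) * (L₂:ℝ) * r₁ / δ) ^ k := by
    refine le_trans hS₁card (pow_le_pow_left₀ ?_ ?_ k)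
    · have : 0 ≤ 2 * r₁ / ε := by positivity
      linarith
    · have he : 2 * r₁ / ε = 2 * (L₁:ℝ) * (L₂:ℝ) * r₁ / δ := by
        rw [hε]
        field_simp
      rw [he]
      have : 2 * (L₁:ℝ) * (L₂:ℝ) * r₁ / δ + 2 * (L₁:ℝ) * (L₂:ℝ) * r₁ / δ
          = 4 * (L₁:ℝ) * (L₂:ℝ) * r₁ / δ := by ring
      linarith
  have hb2 : (S₂.card : ℝ) ≤ (2*(p:ℝ)+1) ^ (K^2 : ℝ) := hS₂card
  have hcard : (S.card : ℝ) ≤ (4 * (L₁:ℝ) * (L₂:ℝ) * r₁ / δ) ^ k * (2*(p:ℝ)+1) ^ (K^2 : ℝ) := by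
    have h1 : S.card ≤ S₁.card * S₂.card := Finset.card_image₂_le _ _ _
    have h2 : (S.card : ℝ) ≤ (S₁.card : ℝ) * (S₂.card : ℝ) := by exact_mod_cast h1
    calc (S.card : ℝ) ≤ (S₁.card : ℝ) * (S₂.card : ℝ) := h2
    _ ≤ (4 * (L₁:ℝ) * (L₂:ℝ) * r₁ / δ) ^ k * (2*(p:ℝ)+1) ^ (K^2 : ℝ) :=
        mul_le_mul hb1 hb2 (Nat.cast_nonneg _) (by positivity)
  have htoNat : ((coveringNumber (2 * δ) T).toNat : ℕ) ≤ S.card := by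
    have h1 : ((coveringNumber (2 * δ) T).toNat : ℕ∞) = coveringNumber (2 * δ) T :=
      ENat.coe_toNat hne
    rw [← h1] at hle
    exact_mod_cast hle
  have h4base : (1:ℝ) ≤ 4 * (L₁:ℝ) * (L₂:ℝ) * r₁ / δ := by
    rw [le_div_iff₀ hδ, one_mul]
    have h0 : (0:ℝ) ≤ 2 * ((L₁:ℝ) * (L₂:ℝ) * r₁) := by positivity
    have : δ ≤ 2 * ((L₁:ℝ) * (L₂:ℝ) * r₁) := by exact_mod_cast hδr
    nlinarith
  have hp1 : (1:ℝ) ≤ 2*(p:ℝ)+1 := by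
    have : (0:ℝ) ≤ (p:ℝ) := Nat.cast_nonneg p
    linarith
  have hRHS0 : 0 ≤ (k:ℝ) * Real.log (4 * (L₁:ℝ) * (L₂:ℝ) * r₁ / δ)
      + K ^ 2 * Real.log (2 * (p:ℝ) + 1) := by
    have h1 : 0 ≤ Real.log (4 * (L₁:ℝ) * (L₂:ℝ) * r₁ / δ) := Real.log_nonneg h4base
    have h2 : 0 ≤ Real.log (2 * (p:ℝ) + 1) := Real.log_nonneg hp1
    have h3 : (0:ℝ) ≤ K^2 := sq_nonneg K
    have h4 : (0:ℝ) ≤ (k:ℝ) := Nat.cast_nonneg k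
    positivity
  have hb1pos : (0:ℝ) < (4 * (L₁:ℝ) * (L₂:ℝ) * r₁ / δ) ^ k := by positivity
  have hb2pos : (0:ℝ) < (2*(p:ℝ)+1) ^ (K^2 : ℝ) := Real.rpow_pos_of_pos (by linarith) _
  have hlog : Real.log ((4 * (L₁:ℝ) * (L₂:ℝ) * r₁ / δ) ^ k * (2*(p:ℝ)+1) ^ (K^2 : ℝ))
      = (k:ℝ) * Real.log (4 * (L₁:ℝ) * (L₂:ℝ) * r₁ / δ) + K ^ 2 * Real.log (2 * (p:ℝ) + 1) := by
    rw [Real.log_mul (ne_of_gt hb1pos) (ne_of_gt hb2pos), Real.log_pow,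
      Real.log_rpow (by linarith : (0:ℝ) < 2*(p:ℝ)+1)]
  rcases Nat.eq_zero_or_pos ((coveringNumber (2 * δ) T).toNat) with h0 | h0
  · rw [h0]
    simpa using hRHS0
  · have hNpos : (0:ℝ) < ((coveringNumber (2 * δ) T).toNat : ℝ) := by exact_mod_cast h0
    have hNle : (((coveringNumber (2 * δ) T).toNat : ℕ) : ℝ)
        ≤ (4 * (L₁:ℝ) * (L₂:ℝ) * r₁ / δ) ^ k * (2*(p:ℝ)+1) ^ (K^2 : ℝ) := by
      calc (((coveringNumber (2 * δ) T).toNat : ℕ) : ℝ) ≤ (S.card : ℝ) := by exact_mod_cast htoNat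
      _ ≤ _ := hcard
    calc Real.log ((coveringNumber (2 * δ) T).toNat)
        ≤ Real.log ((4 * (L₁:ℝ) * (L₂:ℝ) * r₁ / δ) ^ k * (2*(p:ℝ)+1) ^ (K^2 : ℝ)) :=
          Real.log_le_log hNpos hNle
    _ = _ := hlog
end

section
/- (Set-Restricted Eigenvalue Condition error bound) Let S ⊆ ℝⁿ and suppose A ∈ ℝ^{m×n} satisfies S-REC(S, γ, δ'), i.e. ‖A(x₁−x₂)‖₂ ≥ γ‖x₁−x₂‖₂ − δ' for all x₁, x₂ ∈ S, with γ > 0. Let x ∈ ℝⁿ, let x̄ ∈ S minimize ‖x − s‖₂ over s ∈ S, and let x̃ ∈ S minimize ‖Ax − As‖₂ over s ∈ S. If additionally ‖A(x − x̄)‖₂ ≤ 2‖x − x̄‖₂, then ‖x − x̃‖₂ ≤ (1 + 4/γ)·‖x − x̄‖₂ + δ'/γ. -/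
/-- S-REC error bound: if `A` satisfies `S-REC(S, γ, δ')`, `xbar` minimizes the true error over
`S`, `xtil` minimizes the measurement error over `S`, and `‖A(x−xbar)‖ ≤ 2‖x−xbar‖`, then
`‖x−xtil‖ ≤ (1 + 4/γ)‖x−xbar‖ + δ'/γ`. -/
theorem srec_error_bound {m n : ℕ}
    (A : EuclideanSpace ℝ (Fin n) →ₗ[ℝ] EuclideanSpace ℝ (Fin m))
    (S : Set (EuclideanSpace ℝ (Fin n))) (γ δ' : ℝ) (hγ : 0 < γ)
    (hSREC : ∀ x₁ ∈ S, ∀ x₂ ∈ S, γ * ‖x₁ - x₂‖ - δ' ≤ ‖A (x₁ - x₂)‖)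
    (x xbar xtil : EuclideanSpace ℝ (Fin n))
    (hxbar : xbar ∈ S ∧ ∀ s ∈ S, ‖x - xbar‖ ≤ ‖x - s‖)
    (hxtil : xtil ∈ S ∧ ∀ s ∈ S, ‖A x - A xtil‖ ≤ ‖A x - A s‖)
    (hAx : ‖A (x - xbar)‖ ≤ 2 * ‖x - xbar‖) :
    ‖x - xtil‖ ≤ (1 + 4 / γ) * ‖x - xbar‖ + δ' / γ := by
  obtain ⟨hb, hbmin⟩ := hxbar
  obtain ⟨ht, htmin⟩ := hxtil
  have h1 : ‖A (xtil - xbar)‖ ≤ 4 * ‖x - xbar‖ := by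
    have : A (xtil - xbar) = (A xtil - A x) + (A x - A xbar) := by
      rw [map_sub]; abel
    rw [this]
    calc ‖(A xtil - A x) + (A x - A xbar)‖ ≤ ‖A xtil - A x‖ + ‖A x - A xbar‖ :=
          norm_add_le _ _
      _ ≤ ‖A x - A xbar‖ + ‖A x - A xbar‖ := by
          rw [norm_sub_rev (A xtil)]; linarith [htmin xbar hb]
      _ ≤ 4 * ‖x - xbar‖ := by
          rw [← map_sub] ; linarith
  have h2 := hSREC xtil ht xbar hb
  have h3 : ‖xtil - xbar‖ ≤ (4 * ‖x - xbar‖ + δ') / γ := by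
    rw [le_div_iff₀ hγ]; nlinarith
  have h4 : ‖x - xtil‖ ≤ ‖x - xbar‖ + ‖xtil - xbar‖ := by
    have := dist_triangle x xbar xtil
    simpa [dist_eq_norm, norm_sub_rev xbar xtil] using this
  have : (1 + 4 / γ) * ‖x - xbar‖ + δ' / γ = ‖x - xbar‖ + (4 * ‖x - xbar‖ + δ') / γ := by
    field_simp; ring
  rw [this]; linarith
end

section
/- Under the S-REC condition S-REC(S, γ, δ') for A and with x̃ the measurement minimizer over S, the intermediate bound ‖G₂(z̄) − G₂(z̃)‖ ≤ (4‖x − G₂(z̄)‖ + δ')/γ holds, where G₂(z̄), G₂(z̃) ∈ S, z̄ minimizes the true error ‖x − G₂(z)‖ and z̃ minimizes the measurement error ‖Ax − AG₂(z)‖ over the same feasible set, assuming ‖A(x − G₂(z̄))‖ ≤ 2‖x − G₂(z̄)‖. -/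
/-- Intermediate S-REC bound: with `S = G₂(Z)` satisfying `S-REC(S, γ, δ')`, `zbar` the
true-error minimizer, `ztil` the measurement-error minimizer over `Z`, and
`‖A(x − G₂(zbar))‖ ≤ 2‖x − G₂(zbar)‖`, one has
`‖G₂(zbar) − G₂(ztil)‖ ≤ (4‖x − G₂(zbar)‖ + δ')/γ`. -/
theorem srec_intermediate_bound {p m n : ℕ}
    (G₂ : EuclideanSpace ℝ (Fin p) → EuclideanSpace ℝ (Fin n))
    (A : EuclideanSpace ℝ (Fin n) →ₗ[ℝ] EuclideanSpace ℝ (Fin m))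
    (Z : Set (EuclideanSpace ℝ (Fin p))) (γ δ' : ℝ) (hγ : 0 < γ)
    (hSREC : ∀ x₁ ∈ G₂ '' Z, ∀ x₂ ∈ G₂ '' Z, γ * ‖x₁ - x₂‖ - δ' ≤ ‖A (x₁ - x₂)‖)
    (x : EuclideanSpace ℝ (Fin n)) (zbar ztil : EuclideanSpace ℝ (Fin p))
    (hzbar : zbar ∈ Z ∧ ∀ z ∈ Z, ‖x - G₂ zbar‖ ≤ ‖x - G₂ z‖)
    (hztil : ztil ∈ Z ∧ ∀ z ∈ Z, ‖A x - A (G₂ ztil)‖ ≤ ‖A x - A (G₂ z)‖)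
    (hAx : ‖A (x - G₂ zbar)‖ ≤ 2 * ‖x - G₂ zbar‖) :
    ‖G₂ zbar - G₂ ztil‖ ≤ (4 * ‖x - G₂ zbar‖ + δ') / γ := by
  have h1 : γ * ‖G₂ zbar - G₂ ztil‖ - δ' ≤ ‖A (G₂ zbar - G₂ ztil)‖ :=
    hSREC _ ⟨zbar, hzbar.1, rfl⟩ _ ⟨ztil, hztil.1, rfl⟩
  have h2 : ‖A (G₂ zbar - G₂ ztil)‖ ≤ ‖A x - A (G₂ zbar)‖ + ‖A x - A (G₂ ztil)‖ := by
    have : A (G₂ zbar - G₂ ztil) = -(A x - A (G₂ zbar)) + (A x - A (G₂ ztil)) := by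
      rw [map_sub]; abel
    rw [this]
    calc _ ≤ ‖-(A x - A (G₂ zbar))‖ + ‖A x - A (G₂ ztil)‖ := norm_add_le _ _
    _ = _ := by rw [norm_neg]
  have h3 : ‖A x - A (G₂ ztil)‖ ≤ ‖A x - A (G₂ zbar)‖ := hztil.2 zbar hzbar.1
  have h4 : ‖A x - A (G₂ zbar)‖ ≤ 2 * ‖x - G₂ zbar‖ := by
    rw [← map_sub A]; exact hAx
  have key : γ * ‖G₂ zbar - G₂ ztil‖ ≤ 4 * ‖x - G₂ zbar‖ + δ' := by nlinarith
  rw [le_div_iff₀ hγ]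
  linarith [mul_comm γ ‖G₂ zbar - G₂ ztil‖]
end
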